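/- Let n, m be positive integers. Let W ∈ ℝ^{n×n} be a symmetric matrix with W·1_n = 1_n, such that 1 is a simple eigenvalue of W and every other eigenvalue of W lies in the open interval (−1, 1). Let G_1, ..., G_n be real symmetric m×m matrices such that G := Σ_{i=1}^n G_i ⪰ ν I_m for some ν > 0, and let H_1, ..., H_n ∈ ℝ^m. For a stepsize β > 0, consider the gradient-tracking iteration: x_i(0) = 0, s_i(0) = H_i, and for t ≥ 0, x_i(t+1) = Σ_{j=1}^n W_{ij} x_j(t) − β s_i(t), and s_i(t+1) = Σ_{j=1}^n W_{ij} s_j(t) + G_i ( x_i(t+1) − x_i(t) ). Then there exists β* > 0 such that for every β ∈ (0, β*) there exist C > 0 and α ∈ (0,1) with ‖x_i(t) − x(∞)‖ ≤ C α^t for all i ∈ {1,...,n} and all t ≥ 0, where x(∞) := −G^{-1} H with H := Σ_{i=1}^n H_i. -/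

import Mathlib

open Matrix Finset

noncomputable def en {ι : Type*} [Fintype ι] (v : ι → ℝ) : ℝ := Real.sqrt (∑ i, (v i)^2)

noncomputable def toE {ι : Type*} [Fintype ι] (v : ι → ℝ) : EuclideanSpace ℝ ι := WithLp.toLp 2 v

lemma en_eqE {ι : Type*} [Fintype ι] (v : ι → ℝ) : en v = ‖toE v‖ := by
  rw [EuclideanSpace.norm_eq]
  simp [en, toE, Real.norm_eq_abs, sq_abs]

lemma en_nonneg {ι : Type*} [Fintype ι] (v : ι → ℝ) : 0 ≤ en v := Real.sqrt_nonneg _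

lemma en_sq {ι : Type*} [Fintype ι] (v : ι → ℝ) : (en v)^2 = ∑ i, (v i)^2 :=
  Real.sq_sqrt (by positivity)

lemma abs_le_en {ι : Type*} [Fintype ι] (v : ι → ℝ) (i : ι) : |v i| ≤ en v := by
  rw [← Real.sqrt_sq_eq_abs]
  exact Real.sqrt_le_sqrt (Finset.single_le_sum (fun j _ => sq_nonneg (v j)) (mem_univ i))

lemma en_le_of_sq_le {ι κ : Type*} [Fintype ι] [Fintype κ] {u : ι → ℝ} {v : κ → ℝ} {c : ℝ}
    (hc : 0 ≤ c) (h : ∑ i, (u i)^2 ≤ c^2 * ∑ i, (v i)^2) : en u ≤ c * en v := by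
  have h2 : en u ≤ Real.sqrt (c^2 * ∑ i, (v i)^2) := Real.sqrt_le_sqrt h
  rwa [Real.sqrt_mul (sq_nonneg c), Real.sqrt_sq hc] at h2

lemma en_add_le {ι : Type*} [Fintype ι] (u v : ι → ℝ) : en (u + v) ≤ en u + en v := by
  rw [en_eqE, en_eqE, en_eqE]
  exact norm_add_le (toE u) (toE v)

lemma en_sub_le {ι : Type*} [Fintype ι] (u v : ι → ℝ) : en (u - v) ≤ en u + en v := by
  rw [en_eqE, en_eqE, en_eqE]
  exact norm_sub_le (toE u) (toE v)

lemma en_smul {ι : Type*} [Fintype ι] (c : ℝ) (v : ι → ℝ) : en (c • v) = |c| * en v := by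
  rw [en_eqE, en_eqE, ← Real.norm_eq_abs]
  exact norm_smul c (toE v)

lemma en_sum_le {ι κ : Type*} [Fintype ι] [Fintype κ] (f : κ → ι → ℝ) :
    en (∑ j, f j) ≤ ∑ j, en (f j) := by
  have : toE (∑ j, f j) = ∑ j, toE (f j) := by simp [toE]
  rw [en_eqE, this]
  refine le_trans (norm_sum_le _ _) ?_
  apply Finset.sum_le_sum
  intro j _
  rw [en_eqE]

lemma mulVec_sq_bound {m : ℕ} (M : Matrix (Fin m) (Fin m) ℝ) (v : Fin m → ℝ) :
    ∑ k, (M.mulVec v k)^2 ≤ (∑ k, ∑ l, |M k l|)^2 * ∑ k, (v k)^2 := by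
  have key : ∀ k, (M.mulVec v k)^2 ≤ (∑ l, |M k l|)^2 * (en v)^2 := by
    intro k
    have h1 : |M.mulVec v k| ≤ (∑ l, |M k l|) * en v := by
      calc |M.mulVec v k| = |∑ l, M k l * v l| := rfl
        _ ≤ ∑ l, |M k l * v l| := Finset.abs_sum_le_sum_abs _ _
        _ ≤ ∑ l, |M k l| * en v := by
            apply Finset.sum_le_sum
            intro l _
            rw [abs_mul]
            exact mul_le_mul_of_nonneg_left (abs_le_en v l) (abs_nonneg _)
        _ = (∑ l, |M k l|) * en v := (Finset.sum_mul _ _ _).symm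
    calc (M.mulVec v k)^2 = |M.mulVec v k|^2 := (sq_abs _).symm
      _ ≤ ((∑ l, |M k l|) * en v)^2 := by
          apply pow_le_pow_left₀ (abs_nonneg _) h1
      _ = (∑ l, |M k l|)^2 * (en v)^2 := mul_pow _ _ _
  calc ∑ k, (M.mulVec v k)^2 ≤ ∑ k, (∑ l, |M k l|)^2 * (en v)^2 :=
        Finset.sum_le_sum (fun k _ => key k)
    _ = (∑ k, (∑ l, |M k l|)^2) * (en v)^2 := (Finset.sum_mul _ _ _).symm
    _ ≤ (∑ k, ∑ l, |M k l|)^2 * (en v)^2 := by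
        apply mul_le_mul_of_nonneg_right _ (sq_nonneg _)
        exact Finset.sum_sq_le_sq_sum_of_nonneg
          (fun k _ => Finset.sum_nonneg (fun l _ => abs_nonneg _))
    _ = (∑ k, ∑ l, |M k l|)^2 * ∑ k, (v k)^2 := by rw [en_sq]

noncomputable def NN {n m : ℕ} (U : Fin n → Fin m → ℝ) : ℝ :=
  en (fun p : Fin n × Fin m => U p.1 p.2)

lemma NN_nonneg {n m : ℕ} (U : Fin n → Fin m → ℝ) : 0 ≤ NN U := en_nonneg _

lemma NN_sq {n m : ℕ} (U : Fin n → Fin m → ℝ) : (NN U)^2 = ∑ i, ∑ k, (U i k)^2 := by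
  rw [NN, en_sq, Fintype.sum_prod_type]

lemma NN_add_le {n m : ℕ} (U V : Fin n → Fin m → ℝ) : NN (U + V) ≤ NN U + NN V := by
  have h : (fun p : Fin n × Fin m => (U + V) p.1 p.2)
      = (fun p : Fin n × Fin m => U p.1 p.2) + (fun p : Fin n × Fin m => V p.1 p.2) := by
    funext p; simp
  simp only [NN]
  rw [h]
  exact en_add_le _ _

lemma NN_sub_le {n m : ℕ} (U V : Fin n → Fin m → ℝ) : NN (U - V) ≤ NN U + NN V := by
  have h : (fun p : Fin n × Fin m => (U - V) p.1 p.2)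
      = (fun p : Fin n × Fin m => U p.1 p.2) - (fun p : Fin n × Fin m => V p.1 p.2) := by
    funext p; simp
  simp only [NN]
  rw [h]
  exact en_sub_le _ _

lemma NN_smul {n m : ℕ} (c : ℝ) (U : Fin n → Fin m → ℝ) :
    NN (fun i => c • U i) = |c| * NN U := by
  have h : (fun p : Fin n × Fin m => (fun i => c • U i) p.1 p.2)
      = c • (fun p : Fin n × Fin m => U p.1 p.2) := by
    funext p; simp
  simp only [NN]
  rw [h]
  exact en_smul _ _

lemma NN_le_of_sq_le {n m n' m' : ℕ} {U : Fin n → Fin m → ℝ} {V : Fin n' → Fin m' → ℝ} {c : ℝ}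
    (hc : 0 ≤ c) (h : ∑ i, ∑ k, (U i k)^2 ≤ c^2 * ∑ i, ∑ k, (V i k)^2) : NN U ≤ c * NN V := by
  have := en_le_of_sq_le (u := fun p : Fin n × Fin m => U p.1 p.2)
    (v := fun p : Fin n' × Fin m' => V p.1 p.2) (c := c) hc
  apply this
  rw [Fintype.sum_prod_type, Fintype.sum_prod_type]
  exact h

lemma en_le_NN {n m : ℕ} (U : Fin n → Fin m → ℝ) (i : Fin n) : en (U i) ≤ NN U := by
  have h1 : (en (U i))^2 ≤ (NN U)^2 := by
    rw [en_sq, NN_sq]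
    exact Finset.single_le_sum (f := fun j => ∑ k, (U j k)^2)
      (fun j _ => Finset.sum_nonneg (fun k _ => sq_nonneg _)) (mem_univ i)
  calc en (U i) = Real.sqrt ((en (U i))^2) := (Real.sqrt_sq (en_nonneg _)).symm
    _ ≤ Real.sqrt ((NN U)^2) := Real.sqrt_le_sqrt h1
    _ = NN U := Real.sqrt_sq (NN_nonneg _)

lemma sum_en_le_NN {n m : ℕ} (U : Fin n → Fin m → ℝ) : ∑ i, en (U i) ≤ n * NN U := by
  calc ∑ i, en (U i) ≤ ∑ _i : Fin n, NN U := Finset.sum_le_sum (fun i _ => en_le_NN U i)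
    _ = n * NN U := by rw [Finset.sum_const, card_univ, Fintype.card_fin, nsmul_eq_mul]

lemma NN_const_le {n m : ℕ} (hn : 0 < n) (v : Fin m → ℝ) :
    NN (fun _ : Fin n => v) ≤ n * en v := by
  apply en_le_of_sq_le (Nat.cast_nonneg n)
  rw [Fintype.sum_prod_type]
  have : ∑ _i : Fin n, ∑ k, (v k)^2 = (n : ℝ) * ∑ k, (v k)^2 := by
    rw [Finset.sum_const, card_univ, Fintype.card_fin, nsmul_eq_mul]
  rw [this]
  have hcast : (1:ℝ) ≤ (n:ℝ) := by exact_mod_cast hn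
  have h1 : (n : ℝ) ≤ (n:ℝ)^2 := by nlinarith
  nlinarith [Finset.sum_nonneg (fun k (_ : k ∈ univ) => sq_nonneg (v k))]

lemma NN_contract {n m : ℕ} {W : Matrix (Fin n) (Fin n) ℝ} {σ : ℝ} (hσ : 0 ≤ σ)
    (hcon : ∀ u : Fin n → ℝ, (∑ i, u i) = 0 →
      (∑ i, (W.mulVec u i)^2) ≤ σ^2 * ∑ i, (u i)^2)
    (U : Fin n → Fin m → ℝ) (hU : (∑ i, U i) = 0) :
    NN (fun i => ∑ j, W i j • U j) ≤ σ * NN U := by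
  apply NN_le_of_sq_le hσ
  have hcol : ∀ k, ∑ i, U i k = 0 := by
    intro k
    have := congrFun hU k
    simpa using this
  have happ : ∀ i k, (∑ j, W i j • U j) k = W.mulVec (fun j => U j k) i := by
    intro i k
    rw [Finset.sum_apply]
    simp [Matrix.mulVec, dotProduct]
  calc ∑ i, ∑ k, ((∑ j, W i j • U j) k)^2
      = ∑ k, ∑ i, (W.mulVec (fun j => U j k) i)^2 := by
        rw [Finset.sum_comm]
        exact Finset.sum_congr rfl (fun k _ => Finset.sum_congr rfl (fun i _ => by rw [happ]))
    _ ≤ ∑ k, σ^2 * ∑ i, (U i k)^2 := Finset.sum_le_sum (fun k _ => hcon _ (hcol k))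
    _ = σ^2 * ∑ i, ∑ k, (U i k)^2 := by rw [← Finset.mul_sum, Finset.sum_comm]

lemma NN_mulVec {n m : ℕ} {M : Fin n → Matrix (Fin m) (Fin m) ℝ} {L : ℝ} (hL : 0 ≤ L)
    (hM : ∀ i (w : Fin m → ℝ), ∑ k, ((M i).mulVec w k)^2 ≤ L^2 * ∑ k, (w k)^2)
    (V : Fin n → Fin m → ℝ) :
    NN (fun i => (M i).mulVec (V i)) ≤ L * NN V := by
  apply NN_le_of_sq_le hL
  calc ∑ i, ∑ k, ((M i).mulVec (V i) k)^2 ≤ ∑ i, L^2 * ∑ k, (V i k)^2 :=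
        Finset.sum_le_sum (fun i _ => hM i (V i))
    _ = L^2 * ∑ i, ∑ k, (V i k)^2 := (Finset.mul_sum _ _ _).symm

lemma descent_step {m : ℕ} {Gs : Matrix (Fin m) (Fin m) ℝ} {ν L η : ℝ}
    (hGpd : ∀ v : Fin m → ℝ, ν * ∑ k, (v k) ^ 2 ≤ v ⬝ᵥ Gs.mulVec v)
    (hGL : ∀ v : Fin m → ℝ, ∑ k, (Gs.mulVec v k)^2 ≤ L^2 * ∑ k, (v k)^2)
    (hη : 0 ≤ η) (h1 : η * L^2 ≤ ν) (h2 : η * ν ≤ 1) (v : Fin m → ℝ) :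
    en (v - η • Gs.mulVec v) ≤ (1 - η*ν/2) * en v := by
  have hc : 0 ≤ 1 - η*ν/2 := by nlinarith
  apply en_le_of_sq_le hc
  have expand : ∑ k, ((v - η • Gs.mulVec v) k)^2
      = ∑ k, (v k)^2 - 2*η*(v ⬝ᵥ Gs.mulVec v) + η^2 * ∑ k, (Gs.mulVec v k)^2 := by
    have : ∀ k, ((v - η • Gs.mulVec v) k)^2
        = (v k)^2 - 2*η*(v k * Gs.mulVec v k) + η^2 * (Gs.mulVec v k)^2 := by
      intro k; simp [sub_sq]; ring
    rw [Finset.sum_congr rfl (fun k _ => this k)]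
    rw [Finset.sum_add_distrib, Finset.sum_sub_distrib, ← Finset.mul_sum, ← Finset.mul_sum]
    rfl
  rw [expand]
  have hd := hGpd v
  have hg := hGL v
  have hs : (0:ℝ) ≤ ∑ k, (v k)^2 := Finset.sum_nonneg (fun k _ => sq_nonneg _)
  have h3 : η^2 * (∑ k, (Gs.mulVec v k)^2) ≤ η^2 * (L^2 * ∑ k, (v k)^2) :=
    mul_le_mul_of_nonneg_left hg (sq_nonneg η)
  have h4 : η^2 * L^2 ≤ η * ν := by nlinarith
  have h5 : η^2 * (L^2 * ∑ k, (v k)^2) ≤ η * ν * ∑ k, (v k)^2 := by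
    rw [← mul_assoc]
    exact mul_le_mul_of_nonneg_right h4 hs
  have h6 : 2*η*(ν * ∑ k, (v k)^2) ≤ 2*η*(v ⬝ᵥ Gs.mulVec v) :=
    mul_le_mul_of_nonneg_left hd (by linarith)
  nlinarith [sq_nonneg (η*ν), mul_nonneg (sq_nonneg (η*ν)) hs]

lemma contraction_lemma (n : ℕ) (hn : 0 < n) (W : Matrix (Fin n) (Fin n) ℝ) (hWsym : W.IsSymm)
    (hW1 : W.mulVec (fun _ => 1) = fun _ => 1)
    (hsimple : Module.finrank ℝ (Module.End.eigenspace (Matrix.toLin' W) 1) = 1)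
    (hspec : ∀ μ : ℝ, Module.End.HasEigenvalue (Matrix.toLin' W) μ →
      μ = 1 ∨ (-1 < μ ∧ μ < 1)) :
    ∃ σ : ℝ, 0 ≤ σ ∧ σ < 1 ∧ ∀ u : Fin n → ℝ, (∑ i, u i) = 0 →
      (∑ i, (W.mulVec u i)^2) ≤ σ^2 * ∑ i, (u i)^2 := by
  have hW : W.IsHermitian := by
    rw [Matrix.IsHermitian]; ext i j
    simp [Matrix.conjTranspose_apply]
    exact congrFun (congrFun hWsym i) j
  set B := hW.eigenvectorBasis with hB
  set lam := hW.eigenvalues with hlam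
  have hne : (Finset.univ : Finset (Fin n)).Nonempty := ⟨⟨0, hn⟩, mem_univ _⟩
  set σ : ℝ := Finset.univ.sup' hne (fun i => if lam i = 1 then 0 else |lam i|) with hσ
  have heig : ∀ i, Matrix.toLin' W (⇑(B i)) = lam i • (⇑(B i) : Fin n → ℝ) := by
    intro i
    have := hW.mulVec_eigenvectorBasis i
    rw [Matrix.toLin'_apply]
    exact this
  have hBne : ∀ i, (⇑(B i) : Fin n → ℝ) ≠ 0 := by
    intro i h
    have := B.orthonormal.ne_zero i
    exact this (by ext k; exact congrFun h k)
  have hev : ∀ i, Module.End.HasEigenvalue (Matrix.toLin' W) (lam i) := by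
    intro i
    exact Module.End.hasEigenvalue_of_hasEigenvector
      ⟨Module.End.mem_eigenspace_iff.2 (heig i), hBne i⟩
  have hσ0 : 0 ≤ σ := by
    refine le_trans ?_ (Finset.le_sup' _ (mem_univ ⟨0, hn⟩))
    split <;> simp [abs_nonneg]
  have hσ1 : σ < 1 := by
    rw [hσ, Finset.sup'_lt_iff]
    intro i _
    by_cases h : lam i = 1
    · simp [h]
    · simp only [if_neg h]
      rcases hspec _ (hev i) with h1 | h2
      · exact absurd h1 h
      · exact abs_lt.2 h2
  have h1mem : (fun _ => (1:ℝ)) ∈ Module.End.eigenspace (Matrix.toLin' W) 1 := by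
    rw [Module.End.mem_eigenspace_iff, Matrix.toLin'_apply, hW1, one_smul]
  have h1ne : (fun _ => (1:ℝ)) ≠ (0 : Fin n → ℝ) := by
    intro h
    exact one_ne_zero (congrFun h ⟨0, hn⟩)
  have hspan : Module.End.eigenspace (Matrix.toLin' W) 1
      = Submodule.span ℝ {(fun _ => (1:ℝ) : Fin n → ℝ)} := by
    symm
    apply Submodule.eq_of_le_of_finrank_le (Submodule.span_le.2 (by simpa using h1mem))
    rw [hsimple, finrank_span_singleton h1ne]
  refine ⟨σ, hσ0, hσ1, ?_⟩
  intro u hu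
  set uE : EuclideanSpace ℝ (Fin n) := WithLp.toLp 2 u with huE
  set wE : EuclideanSpace ℝ (Fin n) := WithLp.toLp 2 (W.mulVec u) with hwE
  have normsq : ∀ v : EuclideanSpace ℝ (Fin n), ‖v‖^2 = ∑ i, (v i)^2 := by
    intro v
    rw [EuclideanSpace.norm_eq, Real.sq_sqrt (by positivity)]
    simp [Real.norm_eq_abs, sq_abs]
  have parseval : ∀ v : EuclideanSpace ℝ (Fin n), ∑ i, (v i)^2 = ∑ i, (B.repr v i)^2 := by
    intro v
    rw [← normsq v, ← B.repr.norm_map v]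
    have := normsq (B.repr v)
    simpa using this
  have hrepr : ∀ i, B.repr wE i = lam i * B.repr uE i := by
    intro i
    rw [B.repr_apply_apply, B.repr_apply_apply]
    rw [PiLp.inner_apply, PiLp.inner_apply]
    simp only [RCLike.inner_apply, conj_trivial]
    simp only [mul_comm (wE.ofLp _) _, mul_comm (uE.ofLp _) _]
    have step1 : ∑ k, (B i) k * wE k = (⇑(B i) : Fin n → ℝ) ⬝ᵥ (W.mulVec u) := rfl
    have step2 : (⇑(B i) : Fin n → ℝ) ⬝ᵥ (W.mulVec u) = (W.mulVec (⇑(B i))) ⬝ᵥ u := by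
      rw [dotProduct_mulVec]
      congr 1
      rw [← Matrix.mulVec_transpose, hWsym]
    have step3 : (W.mulVec (⇑(B i))) ⬝ᵥ u = lam i * ∑ k, (B i) k * uE k := by
      rw [hW.mulVec_eigenvectorBasis i]
      simp [dotProduct, Finset.mul_sum, mul_assoc]
      rfl
    rw [step1, step2, step3]
  have key : ∀ i, lam i = 1 → B.repr uE i = 0 := by
    intro i h1
    have hmem : (⇑(B i) : Fin n → ℝ) ∈ Module.End.eigenspace (Matrix.toLin' W) 1 := by
      rw [Module.End.mem_eigenspace_iff]
      rw [heig i, h1, one_smul]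
    rw [hspan, Submodule.mem_span_singleton] at hmem
    obtain ⟨κ, hκ⟩ := hmem
    rw [B.repr_apply_apply, PiLp.inner_apply]
    simp only [RCLike.inner_apply, conj_trivial]
    simp only [mul_comm (uE.ofLp _) _]
    have hval : ∀ k, (B i) k = κ := by
      intro k
      have := congrFun hκ k
      simpa using this.symm
    calc ∑ k, (B i) k * uE k = ∑ k, κ * u k := by
          apply Finset.sum_congr rfl; intro k _; rw [hval k]
      _ = κ * ∑ k, u k := (Finset.mul_sum _ _ _).symm
      _ = 0 := by rw [hu]; ring
  calc ∑ i, (W.mulVec u i)^2 = ∑ i, (B.repr wE i)^2 := parseval wE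
    _ = ∑ i, (lam i * B.repr uE i)^2 := by
        apply Finset.sum_congr rfl; intro i _; rw [hrepr i]
    _ ≤ ∑ i, σ^2 * (B.repr uE i)^2 := by
        apply Finset.sum_le_sum; intro i _
        by_cases h : lam i = 1
        · rw [key i h]; simp
        · have hle : |lam i| ≤ σ := by
            have := Finset.le_sup' (fun i => if lam i = 1 then 0 else |lam i|) (mem_univ i)
            rwa [if_neg h] at this
          rw [mul_pow]
          apply mul_le_mul_of_nonneg_right _ (sq_nonneg _)
          calc (lam i)^2 = |lam i|^2 := (sq_abs _).symm
            _ ≤ σ^2 := pow_le_pow_left₀ (abs_nonneg _) hle 2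
    _ = σ^2 * ∑ i, (B.repr uE i)^2 := (Finset.mul_sum _ _ _).symm
    _ = σ^2 * ∑ i, (u i)^2 := by rw [← parseval uE]

set_option maxHeartbeats 1000000 in
theorem stmt8 (n m : ℕ) (hn : 0 < n) (hm : 0 < m)
    (W : Matrix (Fin n) (Fin n) ℝ) (hWsym : W.IsSymm)
    (hW1 : W.mulVec (fun _ => 1) = fun _ => 1)
    (hsimple : Module.finrank ℝ (Module.End.eigenspace (Matrix.toLin' W) 1) = 1)
    (hspec : ∀ μ : ℝ, Module.End.HasEigenvalue (Matrix.toLin' W) μ →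
      μ = 1 ∨ (-1 < μ ∧ μ < 1))
    (G : Fin n → Matrix (Fin m) (Fin m) ℝ) (hGsym : ∀ i, (G i).IsSymm)
    (ν : ℝ) (hν : 0 < ν)
    (hGpd : ∀ x : Fin m → ℝ, ν * ∑ k, (x k) ^ 2 ≤ x ⬝ᵥ (∑ i, G i).mulVec x)
    (H : Fin n → Fin m → ℝ) :
    ∃ βstar : ℝ, 0 < βstar ∧ ∀ β : ℝ, 0 < β → β < βstar →
      ∀ x s : ℕ → Fin n → Fin m → ℝ,
        (∀ i, x 0 i = 0) →
        (∀ i, s 0 i = H i) →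
        (∀ t i, x (t + 1) i = (∑ j, W i j • x t j) - β • s t i) →
        (∀ t i, s (t + 1) i = (∑ j, W i j • s t j) + (G i).mulVec (x (t + 1) i - x t i)) →
        ∃ C : ℝ, 0 < C ∧ ∃ α : ℝ, α ∈ Set.Ioo (0 : ℝ) 1 ∧
          ∀ i t, Real.sqrt
              (∑ k, (x t i k - (-(∑ i', G i')⁻¹.mulVec (∑ i', H i')) k) ^ 2)
            ≤ C * α ^ t := by
  obtain ⟨σ, hσ0, hσ1, hcon⟩ := contraction_lemma n hn W hWsym hW1 hsimple hspec
  have hnR : (1:ℝ) ≤ (n:ℝ) := by exact_mod_cast hn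
  have hnR0 : (0:ℝ) < (n:ℝ) := by linarith
  set τ : ℝ := (n:ℝ)⁻¹ with hτdef
  have hτ0 : 0 < τ := inv_pos.2 hnR0
  have hτ1 : τ ≤ 1 := by rw [hτdef]; rw [inv_le_one_iff₀]; right; exact hnR
  have hτn : τ * (n:ℝ) = 1 := inv_mul_cancel₀ (ne_of_gt hnR0)
  -- the smoothness constant
  set L : ℝ := 1 + ∑ i, ∑ k, ∑ l, |G i k l| with hLdef
  have habs : (0:ℝ) ≤ ∑ i, ∑ k, ∑ l, |G i k l| := by positivity
  have hL1 : 1 ≤ L := by rw [hLdef]; linarith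
  have hL0 : (0:ℝ) < L := by linarith
  have hGiL : ∀ i (w : Fin m → ℝ), ∑ k, ((G i).mulVec w k)^2 ≤ L^2 * ∑ k, (w k)^2 := by
    intro i w
    refine le_trans (mulVec_sq_bound (G i) w) ?_
    apply mul_le_mul_of_nonneg_right _ (Finset.sum_nonneg (fun k _ => sq_nonneg _))
    have h1 : ∑ k, ∑ l, |G i k l| ≤ L := by
      rw [hLdef]
      have : ∑ k, ∑ l, |G i k l| ≤ ∑ i', ∑ k, ∑ l, |G i' k l| :=
        Finset.single_le_sum (f := fun i' => ∑ k, ∑ l, |G i' k l|)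
          (fun i' _ => by positivity) (mem_univ i)
      linarith
    exact pow_le_pow_left₀ (by positivity) h1 2
  clear_value L
  set Gs : Matrix (Fin m) (Fin m) ℝ := ∑ i, G i with hGsdef
  have hGsL : ∀ (w : Fin m → ℝ), ∑ k, (Gs.mulVec w k)^2 ≤ L^2 * ∑ k, (w k)^2 := by
    intro w
    refine le_trans (mulVec_sq_bound Gs w) ?_
    apply mul_le_mul_of_nonneg_right _ (Finset.sum_nonneg (fun k _ => sq_nonneg _))
    have h1 : ∑ k, ∑ l, |Gs k l| ≤ L := by
      rw [hLdef]
      have h2 : ∀ k l, |Gs k l| ≤ ∑ i, |G i k l| := by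
        intro k l
        rw [hGsdef]
        have : (∑ i, G i) k l = ∑ i, G i k l := by
          simp [Matrix.sum_apply]
        rw [this]
        exact Finset.abs_sum_le_sum_abs _ _
      calc ∑ k, ∑ l, |Gs k l| ≤ ∑ k, ∑ l, ∑ i, |G i k l| :=
            Finset.sum_le_sum (fun k _ => Finset.sum_le_sum (fun l _ => h2 k l))
        _ = ∑ i, ∑ k, ∑ l, |G i k l| := by
            rw [Finset.sum_congr rfl (fun k (_ : k ∈ univ) =>
              (Finset.sum_comm : ∑ l, ∑ i, |G i k l| = ∑ i, ∑ l, |G i k l|))]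
            exact Finset.sum_comm
        _ ≤ 1 + ∑ i, ∑ k, ∑ l, |G i k l| := by linarith
    exact pow_le_pow_left₀ (by positivity) h1 2
  -- constants
  have h1σ : 0 < 1 - σ := by linarith
  clear_value τ
  set Q : ℝ := (1+(n:ℝ)) * L * (2 + (n:ℝ)*L) with hQdef
  have hQ0 : 0 < Q := by
    rw [hQdef]
    exact mul_pos (mul_pos (by linarith) hL0) (by nlinarith [mul_pos hnR0 hL0])
  have q1' : (1+(n:ℝ))*L*(2+(n:ℝ)*L) ≤ Q := le_of_eq hQdef.symm
  have q2 : (1+(n:ℝ))*L ≤ Q := by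
    rw [hQdef]
    nlinarith [mul_nonneg (mul_nonneg (by linarith : (0:ℝ) ≤ 1+(n:ℝ)) hL0.le)
      (mul_nonneg hnR0.le hL0.le), mul_nonneg (by linarith : (0:ℝ) ≤ 1+(n:ℝ)) hL0.le]
  have q3 : (1+(n:ℝ))*L*L ≤ Q := by
    rw [hQdef]
    nlinarith [mul_nonneg (mul_nonneg (by linarith : (0:ℝ) ≤ 1+(n:ℝ)) hL0.le)
      (mul_nonneg hnR0.le hL0.le), mul_nonneg (mul_nonneg (by linarith : (0:ℝ) ≤ 1+(n:ℝ)) hL0.le)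
      hL0.le, hL1]
  clear_value Q
  set δ3 : ℝ := 4*Q/(τ*ν) with hδ3def
  have hδ30 : 0 < δ3 := by
    rw [hδ3def]
    exact div_pos (by linarith) (mul_pos hτ0 hν)
  have hδ3eq : δ3*(τ*ν) = 4*Q := by
    rw [hδ3def]
    field_simp
  clear_value δ3
  set δ1 : ℝ := 2*(Q + δ3*L)/(1-σ) with hδ1def
  have hδ10 : 0 < δ1 := by
    rw [hδ1def]
    exact div_pos (by nlinarith [mul_pos hδ30 hL0]) h1σ
  have hδ1eq : δ1*(1-σ) = 2*(Q + δ3*L) := by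
    rw [hδ1def]
    field_simp
  clear_value δ1
  have hden : (0:ℝ) < δ1+Q+τ*ν/4+1 := by nlinarith [mul_pos hτ0 hν]
  refine ⟨min (min 1 (ν/L^2)) (min ((1-σ)/(δ1+Q+τ*ν/4+1)) (min (2*(1-σ)/(τ*ν)) (1/ν))),
    lt_min (lt_min one_pos (div_pos hν (pow_pos hL0 2)))
      (lt_min (div_pos h1σ hden)
        (lt_min (div_pos (by linarith) (mul_pos hτ0 hν)) (div_pos one_pos hν))), ?_⟩
  intro β hβ0 hβs x s hx0 hs0 hxr hsr
  have hβ1 : β ≤ 1 := le_of_lt (lt_of_lt_of_le hβs (le_trans (min_le_left _ _) (min_le_left _ _)))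
  have hβL : β * L^2 ≤ ν := by
    have := lt_of_lt_of_le hβs (le_trans (min_le_left _ _) (min_le_right _ _))
    rw [lt_div_iff₀ (pow_pos hL0 2)] at this
    linarith
  have hβii : β * (δ1+Q+τ*ν/4) ≤ 1 - σ := by
    have := lt_of_lt_of_le hβs (le_trans (min_le_right _ _) (min_le_left _ _))
    rw [lt_div_iff₀ hden] at this
    have expand : β*(δ1+Q+τ*ν/4+1) = β*(δ1+Q+τ*ν/4) + β := by ring
    linarith
  have hβiii : β*τ*ν/4 ≤ (1-σ)/2 := by
    have := lt_of_lt_of_le hβs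
      (le_trans (min_le_right _ _) (le_trans (min_le_right _ _) (min_le_left _ _)))
    rw [lt_div_iff₀ (mul_pos hτ0 hν)] at this
    have expand : β*(τ*ν) = β*τ*ν := by ring
    linarith
  have hβν : β * ν ≤ 1 := by
    have := lt_of_lt_of_le hβs
      (le_trans (min_le_right _ _) (le_trans (min_le_right _ _) (min_le_right _ _)))
    rw [lt_div_iff₀ hν] at this
    linarith
  
  -- row and column sums of W
  have rowsum : ∀ i, ∑ j, W i j = 1 := by
    intro i
    have h := congrFun hW1 i
    simpa [Matrix.mulVec, dotProduct] using h
  have colsum : ∀ j, ∑ i, W i j = 1 := by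
    intro j
    have e : ∀ i, W i j = W j i := by
      intro i
      exact congrFun (congrFun hWsym j) i
    rw [Finset.sum_congr rfl (fun i _ => e i)]
    exact rowsum j
  have mix_sum : ∀ (v : Fin n → Fin m → ℝ), ∑ i, ∑ j, W i j • v j = ∑ j, v j := by
    intro v
    rw [Finset.sum_comm]
    refine Finset.sum_congr rfl (fun j _ => ?_)
    rw [← Finset.sum_smul, colsum j, one_smul]
  -- fixed point
  set Hs : Fin m → ℝ := ∑ i, H i with hHsdef
  set xinf : Fin m → ℝ := -Gs⁻¹.mulVec Hs with hxinfdef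
  have hGsHerm : Gs.IsHermitian := by
    rw [Matrix.IsHermitian]; ext k l
    simp only [Matrix.conjTranspose_apply, star_trivial]
    rw [hGsdef, Matrix.sum_apply, Matrix.sum_apply]
    refine Finset.sum_congr rfl (fun i _ => ?_)
    exact congrFun (congrFun (hGsym i) k) l
  have hGsPD : Gs.PosDef := by
    rw [Matrix.posDef_iff_dotProduct_mulVec]
    refine ⟨hGsHerm, ?_⟩
    intro v hv
    have h1 : 0 < ∑ k, (v k)^2 := by
      rcases lt_or_eq_of_le (Finset.sum_nonneg (fun k (_ : k ∈ univ) => sq_nonneg (v k))) with h | h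
      · exact h
      · exfalso
        apply hv
        funext k
        have h2 := (Finset.sum_eq_zero_iff_of_nonneg
          (fun k (_ : k ∈ univ) => sq_nonneg (v k))).1 h.symm
        exact pow_eq_zero_iff two_ne_zero |>.1 (h2 k (mem_univ k))
    have h2 : star v = v := funext fun k => star_trivial _
    rw [h2]
    calc (0:ℝ) < ν * ∑ k, (v k)^2 := by positivity
      _ ≤ v ⬝ᵥ Gs.mulVec v := hGpd v
  have hdet : IsUnit Gs.det := hGsPD.det_pos.ne'.isUnit
  have hGsinv : Gs.mulVec xinf = -Hs := by
    rw [hxinfdef, Matrix.mulVec_neg, Matrix.mulVec_mulVec, Matrix.mul_nonsing_inv _ hdet,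
      Matrix.one_mulVec]
  -- averages and errors
  set xb : ℕ → Fin m → ℝ := fun t => τ • ∑ i, x t i with hxbdef
  set sb : ℕ → Fin m → ℝ := fun t => τ • ∑ i, s t i with hsbdef
  set U : ℕ → Fin n → Fin m → ℝ := fun t i => x t i - xb t with hUdef
  set S : ℕ → Fin n → Fin m → ℝ := fun t i => s t i - sb t with hSdef
  set a : ℕ → ℝ := fun t => NN (U t) with hadef
  set b : ℕ → ℝ := fun t => NN (S t) with hbdef
  set c : ℕ → ℝ := fun t => en (xb t - xinf) with hcdef
  set R : ℕ → Fin m → ℝ := fun t => ∑ i, (G i).mulVec (U t i) with hRdef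
  have hxbrec : ∀ t, xb (t+1) = xb t - β • sb t := by
    intro t
    show τ • ∑ i, x (t+1) i = τ • ∑ i, x t i - β • (τ • ∑ i, s t i)
    rw [Finset.sum_congr rfl (fun i (_ : i ∈ univ) => hxr t i), Finset.sum_sub_distrib, mix_sum]
    rw [smul_sub]
    congr 1
    rw [← Finset.smul_sum, smul_comm]
  have hinv : ∀ t, ∑ i, s t i = (∑ i, (G i).mulVec (x t i)) + Hs := by
    intro t
    induction t with
    | zero =>
      have e1 : ∑ i, s 0 i = Hs := by
        rw [hHsdef]
        exact Finset.sum_congr rfl (fun i _ => hs0 i)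
      have e2 : ∑ i, (G i).mulVec (x 0 i) = 0 := by
        apply Finset.sum_eq_zero
        intro i _
        rw [hx0 i, Matrix.mulVec_zero]
      rw [e1, e2, zero_add]
    | succ t ih =>
      rw [Finset.sum_congr rfl (fun i (_ : i ∈ univ) => hsr t i), Finset.sum_add_distrib,
        mix_sum, ih]
      have e : ∑ i, (G i).mulVec (x (t+1) i - x t i)
          = (∑ i, (G i).mulVec (x (t+1) i)) - ∑ i, (G i).mulVec (x t i) := by
        rw [← Finset.sum_sub_distrib]
        exact Finset.sum_congr rfl (fun i _ => Matrix.mulVec_sub _ _ _)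
      rw [e]
      abel
  have hsum_s : ∀ t, ∑ i, s t i = Gs.mulVec (xb t - xinf) + R t := by
    intro t
    rw [hinv t]
    have e1 : ∀ i, (G i).mulVec (x t i) = (G i).mulVec (U t i) + (G i).mulVec (xb t) := by
      intro i
      have e : x t i = U t i + xb t := by
        show x t i = (x t i - xb t) + xb t
        abel
      rw [← Matrix.mulVec_add, ← e]
    rw [Finset.sum_congr rfl (fun i (_ : i ∈ univ) => e1 i), Finset.sum_add_distrib]
    have e2 : ∑ i, (G i).mulVec (xb t) = Gs.mulVec (xb t) := by
      funext k
      rw [Finset.sum_apply]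
      simp only [Matrix.mulVec, dotProduct, hGsdef, Matrix.sum_apply]
      rw [Finset.sum_comm]
      exact Finset.sum_congr rfl (fun l _ => by rw [Finset.sum_mul])
    have e3 : Gs.mulVec (xb t - xinf) = Gs.mulVec (xb t) + Hs := by
      rw [Matrix.mulVec_sub, hGsinv]
      abel
    rw [e2, e3]
    abel
  have hU0 : ∀ t, ∑ i, U t i = 0 := by
    intro t
    show ∑ i, (x t i - xb t) = 0
    rw [Finset.sum_sub_distrib, Finset.sum_const, card_univ, Fintype.card_fin,
      ← Nat.cast_smul_eq_nsmul ℝ]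
    show ∑ i, x t i - (n:ℝ) • (τ • ∑ i, x t i) = 0
    rw [smul_smul, show ((n:ℝ) * τ) = 1 from by rw [mul_comm]; exact hτn, one_smul, sub_self]
  have hS0 : ∀ t, ∑ i, S t i = 0 := by
    intro t
    show ∑ i, (s t i - sb t) = 0
    rw [Finset.sum_sub_distrib, Finset.sum_const, card_univ, Fintype.card_fin,
      ← Nat.cast_smul_eq_nsmul ℝ]
    show ∑ i, s t i - (n:ℝ) • (τ • ∑ i, s t i) = 0
    rw [smul_smul, show ((n:ℝ) * τ) = 1 from by rw [mul_comm]; exact hτn, one_smul, sub_self]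
  
  have ha0 : ∀ t, 0 ≤ a t := fun t => NN_nonneg _
  have hb0 : ∀ t, 0 ≤ b t := fun t => NN_nonneg _
  have hc0 : ∀ t, 0 ≤ c t := fun t => en_nonneg _
  have hR_en : ∀ t, en (R t) ≤ (n:ℝ) * L * a t := by
    intro t
    refine le_trans (en_sum_le _) ?_
    calc ∑ i, en ((G i).mulVec (U t i)) ≤ ∑ i, L * en (U t i) :=
          Finset.sum_le_sum (fun i _ => en_le_of_sq_le hL0.le (hGiL i _))
      _ = L * ∑ i, en (U t i) := (Finset.mul_sum _ _ _).symm
      _ ≤ L * ((n:ℝ) * NN (U t)) :=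
          mul_le_mul_of_nonneg_left (sum_en_le_NN _) hL0.le
      _ = (n:ℝ) * L * a t := by rw [hadef]; ring
  have hsb_en : ∀ t, en (sb t) ≤ τ*L*(c t) + L * a t := by
    intro t
    have e : sb t = τ • (Gs.mulVec (xb t - xinf) + R t) := by
      show τ • ∑ i, s t i = _
      rw [hsum_s t]
    rw [e, en_smul, abs_of_pos hτ0]
    have h2 : en (Gs.mulVec (xb t - xinf)) ≤ L * c t :=
      en_le_of_sq_le hL0.le (hGsL _)
    have h1 : en (Gs.mulVec (xb t - xinf) + R t) ≤ L * c t + (n:ℝ) * L * a t := by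
      refine le_trans (en_add_le _ _) ?_
      have := hR_en t
      linarith
    calc τ * en (Gs.mulVec (xb t - xinf) + R t) ≤ τ * (L * c t + (n:ℝ) * L * a t) :=
          mul_le_mul_of_nonneg_left h1 hτ0.le
      _ = τ*L*(c t) + (τ*(n:ℝ))*L*(a t) := by ring
      _ = τ*L*(c t) + L * a t := by rw [hτn, one_mul]
  -- C1
  have hC1 : ∀ t, c (t+1) ≤ (1 - β*τ*ν/2) * c t + β*L*(a t) := by
    intro t
    have hid : xb (t+1) - xinf
        = ((xb t - xinf) - (β*τ) • Gs.mulVec (xb t - xinf)) - (β*τ) • R t := by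
      rw [hxbrec t]
      have e : sb t = τ • (Gs.mulVec (xb t - xinf) + R t) := by
        show τ • ∑ i, s t i = _
        rw [hsum_s t]
      rw [e]
      rw [smul_smul, smul_add]
      abel
    show en (xb (t+1) - xinf) ≤ _
    rw [hid]
    refine le_trans (en_sub_le _ _) ?_
    have h1 : en ((xb t - xinf) - (β*τ) • Gs.mulVec (xb t - xinf))
        ≤ (1 - β*τ*ν/2) * en (xb t - xinf) := by
      have := descent_step hGpd hGsL (η := β*τ) (mul_pos hβ0 hτ0).le
        (by nlinarith [mul_nonneg (mul_nonneg hβ0.le (by linarith : (0:ℝ) ≤ 1-τ)) (sq_nonneg L)])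
        (by nlinarith [mul_nonneg (mul_nonneg hβ0.le (by linarith : (0:ℝ) ≤ 1-τ)) hν.le])
        (xb t - xinf)
      calc en ((xb t - xinf) - (β*τ) • Gs.mulVec (xb t - xinf))
          ≤ (1 - (β*τ)*ν/2) * en (xb t - xinf) := this
        _ = (1 - β*τ*ν/2) * en (xb t - xinf) := by ring
    have h2 : en ((β*τ) • R t) = (β*τ) * en (R t) := by
      rw [en_smul, abs_of_pos (mul_pos hβ0 hτ0)]
    have h3 : (β*τ) * en (R t) ≤ (β*τ) * ((n:ℝ)*L*(a t)) :=
      mul_le_mul_of_nonneg_left (hR_en t) (mul_pos hβ0 hτ0).le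
    rw [h2]
    refine le_trans (add_le_add h1 h3) (le_of_eq ?_)
    have h4 : (β*τ) * ((n:ℝ)*L*(a t)) = β*L*(a t) := by
      have e9 : β*τ*(n:ℝ) = β := by rw [mul_assoc, hτn, mul_one]
      calc (β*τ) * ((n:ℝ)*L*(a t)) = (β*τ*(n:ℝ)) * (L * a t) := by ring
        _ = β * (L * a t) := by rw [e9]
        _ = β*L*(a t) := by ring
    rw [h4]
  -- C2
  have hC2 : ∀ t, a (t+1) ≤ σ * a t + β * b t := by
    intro t
    have hid : U (t+1) = (fun i => ∑ j, W i j • U t j) + (fun i => (-β) • S t i) := by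
      funext i k
      show (x (t+1) i - xb (t+1)) k = _
      rw [hxr t i, hxbrec t]
      simp only [Pi.add_apply, Pi.sub_apply, Finset.sum_apply, Pi.smul_apply, smul_eq_mul]
      have e1 : ∑ j, W i j * (U t j) k = (∑ j, W i j * x t j k) - (∑ j, W i j) * xb t k := by
        have e0 : ∀ j, W i j * (U t j) k = W i j * x t j k - W i j * xb t k := by
          intro j
          show W i j * (x t j k - xb t k) = _
          ring
        rw [Finset.sum_congr rfl (fun j _ => e0 j), Finset.sum_sub_distrib, Finset.sum_mul]
      rw [e1, rowsum i]
      have e2 : S t i k = s t i k - sb t k := rfl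
      rw [e2]
      ring
    show NN (U (t+1)) ≤ _
    rw [hid]
    refine le_trans (NN_add_le _ _) ?_
    have h1 := NN_contract hσ0 hcon (U t) (hU0 t)
    have h2 : NN (fun i => (-β) • S t i) = β * NN (S t) := by
      rw [NN_smul, abs_neg, abs_of_pos hβ0]
    rw [h2]
    exact add_le_add h1 le_rfl
  -- difference and tracking quantities
  set D : ℕ → Fin n → Fin m → ℝ := fun t i => x (t+1) i - x t i with hDdef
  set Dl : ℕ → Fin n → Fin m → ℝ := fun t i => (G i).mulVec (D t i) with hDldef
  set db : ℕ → Fin m → ℝ := fun t => τ • ∑ i, Dl t i with hdbdef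
  have hNND : ∀ t, NN (D t) ≤ 2 * a t + β * b t + β*L*(c t) + β*(n:ℝ)*L*(a t) := by
    intro t
    have hid : D t = (fun i => ∑ j, W i j • U t j)
        + ((fun i => (-1:ℝ) • U t i) + (fun i => (-β) • s t i)) := by
      funext i k
      show (x (t+1) i - x t i) k = _
      rw [hxr t i]
      simp only [Pi.add_apply, Pi.sub_apply, Finset.sum_apply, Pi.smul_apply, smul_eq_mul]
      have e1 : ∑ j, W i j * (U t j) k = (∑ j, W i j * x t j k) - (∑ j, W i j) * xb t k := by
        have e0 : ∀ j, W i j * (U t j) k = W i j * x t j k - W i j * xb t k := by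
          intro j
          show W i j * (x t j k - xb t k) = _
          ring
        rw [Finset.sum_congr rfl (fun j _ => e0 j), Finset.sum_sub_distrib, Finset.sum_mul]
      rw [e1, rowsum i]
      have e2 : U t i k = x t i k - xb t k := rfl
      rw [e2]
      ring
    rw [hid]
    refine le_trans (NN_add_le _ _) ?_
    refine le_trans (add_le_add le_rfl (NN_add_le _ _)) ?_
    have h1 := NN_contract hσ0 hcon (U t) (hU0 t)
    have h2 : NN (fun i => (-1:ℝ) • U t i) = NN (U t) := by
      rw [NN_smul]
      simp
    have h3 : NN (fun i => (-β) • s t i) ≤ β * (NN (S t) + (n:ℝ) * en (sb t)) := by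
      have e : (fun i => (-β) • s t i) = fun i => (-β) • (S t i + sb t) := by
        funext i k
        show (-β) * s t i k = (-β) * ((s t i k - sb t k) + sb t k)
        ring
      rw [e, NN_smul, abs_neg, abs_of_pos hβ0]
      apply mul_le_mul_of_nonneg_left _ hβ0.le
      have e2 : (fun i => S t i + sb t) = S t + (fun _ => sb t) := rfl
      rw [e2]
      exact le_trans (NN_add_le _ _) (add_le_add le_rfl (NN_const_le hn (sb t)))
    have h5 : (n:ℝ) * en (sb t) ≤ L * c t + (n:ℝ)*L*(a t) := by
      calc (n:ℝ) * en (sb t) ≤ (n:ℝ) * (τ*L*(c t) + L * a t) :=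
            mul_le_mul_of_nonneg_left (hsb_en t) (le_of_lt hnR0)
        _ = ((n:ℝ)*τ)*L*(c t) + (n:ℝ)*L*(a t) := by ring
        _ = L * c t + (n:ℝ)*L*(a t) := by rw [mul_comm (n:ℝ) τ, hτn, one_mul]
    have h9 : NN (U t) = a t := rfl
    have h9b : NN (S t) = b t := rfl
    rw [h2, h9]
    rw [h9] at h1
    rw [h9b] at h3
    have h10 : NN (fun i => (-β) • s t i) ≤ β * (b t + (L * c t + (n:ℝ)*L*(a t))) :=
      le_trans h3 (mul_le_mul_of_nonneg_left (by linarith) hβ0.le)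
    have h11 : σ * a t ≤ 1 * a t := mul_le_mul_of_nonneg_right (by linarith) (ha0 t)
    have expand : β * (b t + (L * c t + (n:ℝ)*L*(a t)))
        = β * b t + β*L*(c t) + β*(n:ℝ)*L*(a t) := by ring
    rw [expand] at h10
    linarith
  have hNNDl : ∀ t, NN (Dl t) ≤ L * NN (D t) := fun t => NN_mulVec hL0.le hGiL (D t)
  -- C3
  have hC3 : ∀ t, b (t+1) ≤ σ * b t + Q * a t + β*Q*(b t) + β*Q*(c t) := by
    intro t
    have hsbrec : sb (t+1) = sb t + db t := by
      show τ • ∑ i, s (t+1) i = _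
      rw [Finset.sum_congr rfl (fun i (_ : i ∈ univ) => hsr t i), Finset.sum_add_distrib, mix_sum]
      rw [smul_add]
    have hid : S (t+1) = (fun i => ∑ j, W i j • S t j) + (fun i => Dl t i - db t) := by
      funext i k
      show (s (t+1) i - sb (t+1)) k = _
      rw [hsr t i, hsbrec]
      simp only [Pi.add_apply, Pi.sub_apply, Finset.sum_apply, Pi.smul_apply, smul_eq_mul]
      have e1 : ∑ j, W i j * (S t j) k = (∑ j, W i j * s t j k) - (∑ j, W i j) * sb t k := by
        have e0 : ∀ j, W i j * (S t j) k = W i j * s t j k - W i j * sb t k := by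
          intro j
          show W i j * (s t j k - sb t k) = _
          ring
        rw [Finset.sum_congr rfl (fun j _ => e0 j), Finset.sum_sub_distrib, Finset.sum_mul]
      rw [e1, rowsum i]
      ring
    show NN (S (t+1)) ≤ _
    rw [hid]
    refine le_trans (NN_add_le _ _) ?_
    have h1 := NN_contract hσ0 hcon (S t) (hS0 t)
    have h9b : NN (S t) = b t := rfl
    rw [h9b] at h1
    have h2 : NN (fun i => Dl t i - db t) ≤ NN (Dl t) + (n:ℝ) * en (db t) := by
      have e2 : (fun i => Dl t i - db t) = Dl t - (fun _ => db t) := rfl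
      rw [e2]
      exact le_trans (NN_sub_le _ _) (add_le_add le_rfl (NN_const_le hn (db t)))
    have h3 : en (db t) ≤ NN (Dl t) := by
      show en (τ • ∑ i, Dl t i) ≤ _
      rw [en_smul, abs_of_pos hτ0]
      calc τ * en (∑ i, Dl t i) ≤ τ * ∑ i, en (Dl t i) :=
            mul_le_mul_of_nonneg_left (en_sum_le _) hτ0.le
        _ ≤ τ * ((n:ℝ) * NN (Dl t)) :=
            mul_le_mul_of_nonneg_left (sum_en_le_NN _) hτ0.le
        _ = (τ * (n:ℝ)) * NN (Dl t) := by ring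
        _ = NN (Dl t) := by rw [hτn, one_mul]
    have h4 := hNNDl t
    have h5 := hNND t
    have k1 : (n:ℝ) * en (db t) ≤ (n:ℝ) * NN (Dl t) :=
      mul_le_mul_of_nonneg_left h3 (le_of_lt hnR0)
    have k3 : (1+(n:ℝ))*NN (Dl t) ≤ (1+(n:ℝ))*(L*NN (D t)) :=
      mul_le_mul_of_nonneg_left h4 (by linarith)
    have k4 : (1+(n:ℝ))*(L*NN (D t))
        ≤ (1+(n:ℝ))*(L*(2 * a t + β * b t + β*L*(c t) + β*(n:ℝ)*L*(a t))) :=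
      mul_le_mul_of_nonneg_left (mul_le_mul_of_nonneg_left h5 hL0.le) (by linarith)
    have hβ1' : 0 ≤ 1 - β := by linarith
    have q1 : (1+(n:ℝ))*L*(2+β*(n:ℝ)*L) ≤ Q := by
      nlinarith [q1', mul_nonneg (mul_nonneg (mul_nonneg (by linarith : (0:ℝ) ≤ 1+(n:ℝ)) hL0.le)
        (mul_nonneg (le_of_lt hnR0) hL0.le)) hβ1']
    have p1 : (1+(n:ℝ))*L*(2+β*(n:ℝ)*L) * a t ≤ Q * a t :=
      mul_le_mul_of_nonneg_right q1 (ha0 t)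
    have p2 : (1+(n:ℝ))*L*(β * b t) ≤ Q * (β * b t) :=
      mul_le_mul_of_nonneg_right q2 (mul_nonneg hβ0.le (hb0 t))
    have p3 : (1+(n:ℝ))*L*L*(β * c t) ≤ Q * (β * c t) :=
      mul_le_mul_of_nonneg_right q3 (mul_nonneg hβ0.le (hc0 t))
    have k5 : (1+(n:ℝ))*(L*(2 * a t + β * b t + β*L*(c t) + β*(n:ℝ)*L*(a t)))
        ≤ Q * a t + β*Q*(b t) + β*Q*(c t) := by nlinarith [p1, p2, p3]
    linarith
  
  -- decompose the target norm, then make everything opaque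
  have hsplit : ∀ t i, en (fun k => x t i k - xinf k) ≤ a t + c t := by
    intro t i
    have split : (fun k => x t i k - xinf k) = (U t i) + (xb t - xinf) := by
      funext k
      show x t i k - xinf k = (x t i k - xb t k) + (xb t k - xinf k)
      ring
    rw [split]
    refine le_trans (en_add_le _ _) ?_
    exact add_le_add (en_le_NN _ i) (le_of_eq rfl)
  clear_value xb sb U S a b c D Dl db R
  clear hcon hGpd mix_sum rowsum colsum hinv hsum_s hR_en hsb_en hNND hNNDl
  clear hxr hsr hx0 hs0 hU0 hS0 hxbrec hGsinv hdet hGsPD hGsHerm hGiL hGsL q1' q2 q3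
  -- Lyapunov function
  obtain ⟨α, hαdef⟩ : ∃ z : ℝ, z = 1 - β*τ*ν/4 := ⟨_, rfl⟩
  have hβτν0 : 0 < β*τ*ν := mul_pos (mul_pos hβ0 hτ0) hν
  have hα1 : α < 1 := by rw [hαdef]; linarith
  have hασ : (1+σ)/2 ≤ α := by rw [hαdef]; linarith [hβiii]
  have hα0 : 0 < α := by linarith
  obtain ⟨V, hVt⟩ : ∃ V : ℕ → ℝ, ∀ t, V t = δ1 * a t + b t + δ3 * c t :=
    ⟨_, fun _ => rfl⟩
  have hV0 : ∀ t, 0 ≤ V t := by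
    intro t
    rw [hVt]
    have h1 := mul_nonneg hδ10.le (ha0 t)
    have h2 := mul_nonneg hδ30.le (hc0 t)
    linarith [hb0 t]
  have hβ1' : 0 ≤ 1 - β := by linarith
  have coefa : δ1*σ + Q + δ3*(β*L) ≤ α*δ1 := by
    rw [hαdef]
    have c1 : 0 ≤ (δ3*L)*(1-β) := mul_nonneg (mul_nonneg hδ30.le hL0.le) hβ1'
    have c2 : δ1*(β*τ*ν/4) ≤ δ1*((1-σ)/2) := mul_le_mul_of_nonneg_left hβiii hδ10.le
    linarith [hδ1eq, c1, c2]
  have coefb : δ1*β + σ + β*Q ≤ α := by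
    rw [hαdef]
    linarith [hβii]
  have coefc : β*Q + δ3*(1 - β*τ*ν/2) ≤ α*δ3 := by
    rw [hαdef]
    have c3 : β*(δ3*(τ*ν)) = β*(4*Q) := by rw [hδ3eq]
    linarith [c3]
  have hVstep : ∀ t, V (t+1) ≤ α * V t := by
    intro t
    have i1 := hC1 t
    have i2 := hC2 t
    have i3 := hC3 t
    have m1 : δ1 * a (t+1) ≤ δ1 * (σ * a t + β * b t) :=
      mul_le_mul_of_nonneg_left i2 hδ10.le
    have m3 : δ3 * c (t+1) ≤ δ3 * ((1 - β*τ*ν/2) * c t + β*L*(a t)) :=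
      mul_le_mul_of_nonneg_left i1 hδ30.le
    have n1 : (δ1*σ + Q + δ3*(β*L)) * a t ≤ (α*δ1) * a t :=
      mul_le_mul_of_nonneg_right coefa (ha0 t)
    have n2 : (δ1*β + σ + β*Q) * b t ≤ α * b t :=
      mul_le_mul_of_nonneg_right coefb (hb0 t)
    have n3 : (β*Q + δ3*(1 - β*τ*ν/2)) * c t ≤ (α*δ3) * c t :=
      mul_le_mul_of_nonneg_right coefc (hc0 t)
    rw [hVt, hVt]
    linarith [m1, i3, m3, n1, n2, n3]
  have hVgeo : ∀ t, V t ≤ V 0 * α^t := by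
    intro t
    induction t with
    | zero => simp
    | succ t ih =>
      calc V (t+1) ≤ α * V t := hVstep t
        _ ≤ α * (V 0 * α^t) := mul_le_mul_of_nonneg_left ih hα0.le
        _ = V 0 * α^(t+1) := by ring
  have hiv : 0 < δ1⁻¹ + δ3⁻¹ := add_pos (inv_pos.2 hδ10) (inv_pos.2 hδ30)
  refine ⟨(δ1⁻¹ + δ3⁻¹) * V 0 + 1, ?_, α, ⟨hα0, hα1⟩, ?_⟩
  · linarith [mul_nonneg hiv.le (hV0 0)]
  · intro i t
    show en (fun k => x t i k - xinf k) ≤ _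
    refine le_trans (hsplit t i) ?_
    have e3 : a t ≤ δ1⁻¹ * V t := by
      have h2 : δ1 * a t ≤ V t := by
        rw [hVt]
        linarith [hb0 t, mul_nonneg hδ30.le (hc0 t)]
      calc a t = δ1⁻¹ * (δ1 * a t) := by field_simp
        _ ≤ δ1⁻¹ * V t := mul_le_mul_of_nonneg_left h2 (inv_pos.2 hδ10).le
    have e4 : c t ≤ δ3⁻¹ * V t := by
      have h2 : δ3 * c t ≤ V t := by
        rw [hVt]
        linarith [hb0 t, mul_nonneg hδ10.le (ha0 t)]
      calc c t = δ3⁻¹ * (δ3 * c t) := by field_simp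
        _ ≤ δ3⁻¹ * V t := mul_le_mul_of_nonneg_left h2 (inv_pos.2 hδ30).le
    have e5 := hVgeo t
    have hαt : 0 < α^t := pow_pos hα0 t
    have f1 : (δ1⁻¹ + δ3⁻¹) * V t ≤ (δ1⁻¹ + δ3⁻¹) * (V 0 * α^t) :=
      mul_le_mul_of_nonneg_left e5 hiv.le
    have f2 : (δ1⁻¹ + δ3⁻¹) * (V 0 * α^t) ≤ ((δ1⁻¹ + δ3⁻¹) * V 0 + 1) * α^t := by
      linarith [hαt]
    linarith
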